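/- Let T > 0, A > 0, κ ≥ 0, β ≥ 0 with κ + β > 0, B ∈ ℝ, α > 0, φ > 0, let Q̄ ≥ 1 be an integer, and let δ̄ : [0, T] → ℝ be continuous. Then there exists a unique continuously differentiable function h = (h₀, h₁, …, h_{Q̄}) : [0, T] → ℝ^{Q̄+1} satisfying, for all t ∈ [0, T]: h₀'(t) = 0 with h₀(T) = 0, and for each q ∈ {1, …, Q̄}, h_q'(t) = φ·q² − sup_{δ ≥ B} A·exp(−(κ+β)·δ + β·δ̄(t))·(δ + h_{q−1}(t) − h_q(t)) with terminal condition h_q(T) = −α·q². -/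

import Mathlib

open Set Real

open Set Real

/-- The maximizer of `δ ↦ exp(-γδ+d)(δ+c)` over `[B, ∞)`. -/
noncomputable def hjbD (γ B c : ℝ) : ℝ := max B (γ⁻¹ - c)

/-- Explicit value of the HJB Hamiltonian supremum. -/
noncomputable def hjbG (A γ B d c : ℝ) : ℝ :=
  A * Real.exp (-γ * hjbD γ B c + d) * (hjbD γ B c + c)

lemma hjb_key_ineq {A γ : ℝ} (hA : 0 < A) (hγ : 0 < γ) (B d c δ : ℝ) (hδ : B ≤ δ) :
    A * Real.exp (-γ * δ + d) * (δ + c) ≤ hjbG A γ B d c := by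
  have hinv : γ * γ⁻¹ = 1 := mul_inv_cancel₀ hγ.ne'
  have key : Real.exp (-γ * δ) * (δ + c) ≤ Real.exp (-γ * hjbD γ B c) * (hjbD γ B c + c) := by
    rcases le_or_gt B (γ⁻¹ - c) with h | h
    · rw [hjbD, max_eq_right h]
      have H : γ * (δ + c) ≤ Real.exp (γ * (δ + c) - 1) := by
        nlinarith [Real.add_one_le_exp (γ * (δ + c) - 1)]
      have hmul : Real.exp (γ * (δ + c) - 1) * Real.exp (-γ * δ) = Real.exp (γ * c - 1) := by
        rw [← Real.exp_add]; ring_nf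
      have hmul2 : Real.exp (-γ * (γ⁻¹ - c)) = Real.exp (γ * c - 1) := by
        congr 1; nlinarith
      rw [hmul2]
      have h2 : γ * (δ + c) * Real.exp (-γ * δ) ≤ Real.exp (γ * c - 1) := by
        calc γ * (δ + c) * Real.exp (-γ * δ)
            ≤ Real.exp (γ * (δ + c) - 1) * Real.exp (-γ * δ) := by
              nlinarith [Real.exp_pos (-γ * δ)]
          _ = Real.exp (γ * c - 1) := hmul
      have h3 : (γ⁻¹ - c + c) = γ⁻¹ := by ring
      rw [h3]
      nlinarith [Real.exp_pos (γ * c - 1)]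
    · rw [hjbD, max_eq_left h.le]
      have hBc : γ⁻¹ < B + c := by linarith
      have hBc0 : 0 < B + c := lt_trans (inv_pos.2 hγ) hBc
      have H : γ * (δ - B) + 1 ≤ Real.exp (γ * (δ - B)) := Real.add_one_le_exp _
      have hmul : Real.exp (γ * (δ - B)) * Real.exp (-γ * δ) = Real.exp (-γ * B) := by
        rw [← Real.exp_add]; ring_nf
      -- (δ+c) ≤ (B+c) * exp(γ(δ-B))
      have h1 : δ + c ≤ (B + c) * Real.exp (γ * (δ - B)) := by
        have hge : 1 ≤ γ * (B + c) := by
          calc (1:ℝ) = γ * γ⁻¹ := hinv.symm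
            _ ≤ γ * (B + c) := by nlinarith
        nlinarith [Real.exp_pos (γ * (δ - B))]
      calc Real.exp (-γ * δ) * (δ + c)
          ≤ Real.exp (-γ * δ) * ((B + c) * Real.exp (γ * (δ - B))) := by
            nlinarith [Real.exp_pos (-γ * δ)]
        _ = Real.exp (-γ * B) * (B + c) := by rw [← hmul]; ring
  have e1 : A * Real.exp (-γ * δ + d) * (δ + c)
      = (A * Real.exp d) * (Real.exp (-γ * δ) * (δ + c)) := by
    rw [Real.exp_add]; ring
  have e2 : hjbG A γ B d c
      = (A * Real.exp d) * (Real.exp (-γ * hjbD γ B c) * (hjbD γ B c + c)) := by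
    rw [hjbG, Real.exp_add]; ring
  rw [e1, e2]
  exact mul_le_mul_of_nonneg_left key (by positivity)

lemma hjb_sSup_eq {A γ : ℝ} (hA : 0 < A) (hγ : 0 < γ) (B d c : ℝ) :
    sSup ((fun δ => A * Real.exp (-γ * δ + d) * (δ + c)) '' Set.Ici B) = hjbG A γ B d c := by
  apply IsGreatest.csSup_eq
  constructor
  · exact ⟨hjbD γ B c, (le_max_left _ _ : B ≤ hjbD γ B c), rfl⟩
  · rintro x ⟨δ, hδ, rfl⟩
    exact hjb_key_ineq hA hγ B d c δ hδ

lemma hjbG_lip_aux {A γ : ℝ} (hA : 0 < A) (hγ : 0 < γ) (B d c₁ c₂ : ℝ) :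
    hjbG A γ B d c₁ - hjbG A γ B d c₂ ≤ A * Real.exp (-γ * B + d) * |c₁ - c₂| := by
  have hD1 : B ≤ hjbD γ B c₁ := le_max_left _ _
  have h1 : A * Real.exp (-γ * hjbD γ B c₁ + d) * (hjbD γ B c₁ + c₂) ≤ hjbG A γ B d c₂ :=
    hjb_key_ineq hA hγ B d c₂ _ hD1
  have h2 : Real.exp (-γ * hjbD γ B c₁ + d) ≤ Real.exp (-γ * B + d) :=
    Real.exp_le_exp.2 (by nlinarith)
  have h3 : c₁ - c₂ ≤ |c₁ - c₂| := le_abs_self _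
  have habs : (0:ℝ) ≤ |c₁ - c₂| := abs_nonneg _
  have hE1 : (0:ℝ) < Real.exp (-γ * hjbD γ B c₁ + d) := Real.exp_pos _
  have : hjbG A γ B d c₁ = A * Real.exp (-γ * hjbD γ B c₁ + d) * (hjbD γ B c₁ + c₂)
      + A * Real.exp (-γ * hjbD γ B c₁ + d) * (c₁ - c₂) := by rw [hjbG]; ring
  nlinarith [mul_le_mul_of_nonneg_left h3 hE1.le, mul_le_mul_of_nonneg_right h2 habs]

lemma hjbG_lipschitz {A γ : ℝ} (hA : 0 < A) (hγ : 0 < γ) (B d c₁ c₂ : ℝ) :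
    |hjbG A γ B d c₁ - hjbG A γ B d c₂| ≤ A * Real.exp (-γ * B + d) * |c₁ - c₂| := by
  rcases abs_cases (hjbG A γ B d c₁ - hjbG A γ B d c₂) with ⟨h, _⟩ | ⟨h, _⟩ <;> rw [h]
  · exact hjbG_lip_aux hA hγ B d c₁ c₂
  · have := hjbG_lip_aux hA hγ B d c₂ c₁
    rw [abs_sub_comm] at this
    linarith

lemma hjbG_continuous (A γ B : ℝ) :
    Continuous (fun p : ℝ × ℝ => hjbG A γ B p.1 p.2) := by
  unfold hjbG hjbD
  fun_prop


lemma icc_mem_nhdsWithin_Iic' {T t : ℝ} (ht : t ∈ Ioc (0:ℝ) T) :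
    Icc (0:ℝ) T ∈ nhdsWithin t (Iic t) :=
  mem_nhdsWithin.2 ⟨Ioi 0, isOpen_Ioi, ht.1,
    fun y hy => ⟨le_of_lt hy.1, le_trans hy.2 ht.2⟩⟩

lemma ode_unique {T : ℝ} (F : ℝ → ℝ → ℝ) (L : NNReal)
    (hlip : ∀ t ∈ Icc (0:ℝ) T, LipschitzWith L (F t))
    {f g : ℝ → ℝ}
    (hf : ∀ t ∈ Icc (0:ℝ) T, HasDerivWithinAt f (F t (f t)) (Icc 0 T) t)
    (hg : ∀ t ∈ Icc (0:ℝ) T, HasDerivWithinAt g (F t (g t)) (Icc 0 T) t)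
    (hend : f T = g T) : ∀ t ∈ Icc (0:ℝ) T, f t = g t := by
  have hvs : ∀ t, LipschitzOnWith L (F t)
      (if t ∈ Icc (0:ℝ) T then (univ : Set ℝ) else ∅) := by
    intro t
    split_ifs with h
    · exact (hlip t h).lipschitzOnWith
    · exact lipschitzOnWith_empty _ _
  have hfc : ContinuousOn f (Icc (0:ℝ) T) := fun t ht => (hf t ht).continuousWithinAt
  have hgc : ContinuousOn g (Icc (0:ℝ) T) := fun t ht => (hg t ht).continuousWithinAt
  exact fun t ht => ODE_solution_unique_of_mem_Icc_left (fun t _ => hvs t) hfc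
    (fun s hs => ((hf s (Ioc_subset_Icc_self hs)).mono_of_mem_nhdsWithin
      (icc_mem_nhdsWithin_Iic' hs)))
    (fun s hs => by simp [Ioc_subset_Icc_self hs]) hgc
    (fun s hs => ((hg s (Ioc_subset_Icc_self hs)).mono_of_mem_nhdsWithin
      (icc_mem_nhdsWithin_Iic' hs)))
    (fun s hs => by simp [Ioc_subset_Icc_self hs]) hend ht

lemma ode_exists {T : ℝ} (hT : 0 < T) (F : ℝ → ℝ → ℝ) (L : NNReal) (hL : 0 < (L:ℝ))
    (hlip : ∀ t ∈ Icc (0:ℝ) T, LipschitzWith L (F t))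
    (hcont : ∀ x : ℝ, ContinuousOn (fun t => F t x) (Icc 0 T))
    (x₀ : ℝ) :
    ∃ f : ℝ → ℝ, f T = x₀ ∧
      ∀ t ∈ Icc (0:ℝ) T, HasDerivWithinAt f (F t (f t)) (Icc 0 T) t := by
  obtain ⟨C₁, hC₁⟩ := (isCompact_Icc).exists_bound_of_continuousOn (hcont x₀)
  set C₀ : ℝ := max C₁ 0 with hC₀def
  have hC₀ : 0 ≤ C₀ := le_max_right _ _
  have hC₀b : ∀ t ∈ Icc (0:ℝ) T, |F t x₀| ≤ C₀ := fun t ht =>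
    le_trans (hC₁ t ht) (le_max_left _ _)
  set M : ℝ := C₀ / L * (Real.exp (L * T) - 1) with hMdef
  have hM : 0 ≤ M := by
    apply mul_nonneg (div_nonneg hC₀ hL.le)
    have : (1:ℝ) ≤ Real.exp (L * T) := Real.one_le_exp (by positivity)
    linarith
  set R : ℝ := M + 1 with hRdef
  have hR1 : 0 < R := by linarith
  set cl : ℝ → ℝ := fun x => x₀ + max (-R) (min R (x - x₀)) with hcl
  have hcl_fix : ∀ x, |x - x₀| ≤ R → cl x = x := by
    intro x hx
    rw [abs_le] at hx
    simp only [hcl, min_eq_right hx.2, max_eq_right hx.1]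
    ring
  have hcl_lip : LipschitzWith 1 cl := by
    apply LipschitzWith.of_dist_le_mul
    intro x y
    simp only [hcl, Real.dist_eq, NNReal.coe_one, one_mul, add_sub_add_left_eq_sub]
    calc |max (-R) (min R (x - x₀)) - max (-R) (min R (y - x₀))|
        = |max (min R (x - x₀)) (-R) - max (min R (y - x₀)) (-R)| := by
          rw [max_comm, max_comm (min R (y - x₀))]
      _ ≤ |min R (x - x₀) - min R (y - x₀)| := abs_max_sub_max_le_abs _ _ _
      _ ≤ max |R - R| |x - x₀ - (y - x₀)| := abs_min_sub_min_le_max _ _ _ _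
      _ ≤ |x - y| := by
          have h1 : x - x₀ - (y - x₀) = x - y := by ring
          rw [h1, sub_self, abs_zero]
          exact max_le (abs_nonneg _) le_rfl
  have hcl_self : cl x₀ = x₀ := hcl_fix x₀ (by rw [sub_self, abs_zero]; exact hR1.le)
  have hcl_dist : ∀ x, |cl x - x₀| ≤ |x - x₀| := by
    intro x
    have := hcl_lip.dist_le_mul x x₀
    rwa [Real.dist_eq, Real.dist_eq, hcl_self, NNReal.coe_one, one_mul] at this
  have hcl_R : ∀ x, |cl x - x₀| ≤ R := by
    intro x
    simp only [hcl, add_sub_cancel_left]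
    rw [abs_le]
    refine ⟨le_max_left _ _, max_le (by linarith) (min_le_left _ _)⟩
  set vR : ℝ → ℝ → ℝ := fun t x => F t (cl x) with hvR
  have hvR_bound : ∀ t ∈ Icc (0:ℝ) T, ∀ x, |vR t x| ≤ C₀ + L * |cl x - x₀| := by
    intro t ht x
    have h1 := (hlip t ht).dist_le_mul (cl x) x₀
    rw [Real.dist_eq, Real.dist_eq] at h1
    calc |vR t x| = |F t x₀ + (F t (cl x) - F t x₀)| := by rw [hvR]; ring_nf
      _ ≤ |F t x₀| + |F t (cl x) - F t x₀| := abs_add_le _ _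
      _ ≤ C₀ + L * |cl x - x₀| := add_le_add (hC₀b t ht) h1
  set C : ℝ := C₀ + L * R with hCdef
  have hCnn : 0 ≤ C := by positivity
  have hpl : IsPicardLindelof vR (tmin := 0) (tmax := T) ⟨T, right_mem_Icc.2 hT.le⟩ x₀
      ⟨C * T, by positivity⟩ 0 ⟨C, hCnn⟩ L := by
    constructor
    · intro t ht
      have h := (hlip t ht).comp hcl_lip
      rw [mul_one] at h
      exact h.lipschitzOnWith
    · exact fun x _ => hcont (cl x)
    · intro t ht x _
      show ‖vR t x‖ ≤ C
      calc ‖vR t x‖ = |vR t x| := rfl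
        _ ≤ C₀ + L * |cl x - x₀| := hvR_bound t ht x
        _ ≤ C₀ + L * R := by nlinarith [hcl_R x, L.coe_nonneg]
    · show C * max (T - T) (T - 0) ≤ C * T - 0
      rw [sub_self, sub_zero, sub_zero, max_eq_right hT.le]
  obtain ⟨f, hfT', hfd⟩ := hpl.exists_eq_forall_mem_Icc_hasDerivWithinAt₀
  have hfT : f T = x₀ := hfT'
  have hfc : ContinuousOn f (Icc (0:ℝ) T) := fun t ht => (hfd t ht).continuousWithinAt
  -- a priori bound via Gronwall on g s = f (T - s) - x₀
  set g : ℝ → ℝ := fun s => f (T - s) - x₀ with hg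
  have hmapsTo : MapsTo (fun u : ℝ => T - u) (Icc (0:ℝ) T) (Icc (0:ℝ) T) := by
    intro u hu
    simp only [mem_Icc] at hu ⊢
    constructor <;> linarith [hu.1, hu.2]
  have hgc : ContinuousOn g (Icc (0:ℝ) T) :=
    ((hfc.comp (continuousOn_const.sub continuousOn_id) hmapsTo).sub continuousOn_const)
  have hgb : ∀ s ∈ Icc (0:ℝ) T, ‖g s‖ ≤ gronwallBound 0 L C₀ (s - 0) := by
    apply norm_le_gronwallBound_of_norm_deriv_right_le
      (f' := fun s => vR (T - s) (f (T - s)) * (-1)) hgc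
    · intro s hs
      have hTs : T - s ∈ Ioc (0:ℝ) T := ⟨by linarith [hs.2], by linarith [hs.1]⟩
      have h1 := (hfd (T - s) (Ioc_subset_Icc_self hTs)).mono_of_mem_nhdsWithin
        (icc_mem_nhdsWithin_Iic' hTs)
      have h2 : HasDerivWithinAt (fun u : ℝ => T - u) (-1) (Ici s) s :=
        ((hasDerivAt_id s).const_sub T).hasDerivWithinAt
      have h3 := HasDerivWithinAt.comp s h1 h2
        (fun u hu => mem_Iic.2 (by simp only [mem_Ici] at hu; linarith))
      exact h3.sub_const x₀
    · simp [hg, hfT]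
    · intro s hs
      have hTs : T - s ∈ Icc (0:ℝ) T := ⟨by linarith [hs.2], by linarith [hs.1]⟩
      have h1 := hvR_bound (T - s) hTs (f (T - s))
      have h2 := hcl_dist (f (T - s))
      have : ‖g s‖ = |f (T - s) - x₀| := rfl
      calc ‖vR (T - s) (f (T - s)) * (-1)‖ = |vR (T - s) (f (T - s))| := by
            rw [norm_mul]; simp
        _ ≤ C₀ + L * |cl (f (T - s)) - x₀| := h1
        _ ≤ C₀ + L * |f (T - s) - x₀| := by nlinarith [L.coe_nonneg]
        _ = (L : ℝ) * ‖g s‖ + C₀ := by rw [this]; ring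
  have hbound : ∀ t ∈ Icc (0:ℝ) T, |f t - x₀| ≤ M := by
    intro t ht
    have hTt : T - t ∈ Icc (0:ℝ) T := hmapsTo ht
    have h1 := hgb (T - t) hTt
    have h2 : g (T - t) = f t - x₀ := by simp [hg]
    rw [h2] at h1
    have h3 : gronwallBound 0 (L:ℝ) C₀ (T - t - 0) = C₀ / L * (Real.exp (L * (T - t)) - 1) := by
      rw [gronwallBound_of_K_ne_0 hL.ne']
      ring_nf
    rw [h3] at h1
    have h4 : Real.exp ((L:ℝ) * (T - t)) ≤ Real.exp (L * T) := by
      apply Real.exp_le_exp.2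
      nlinarith [ht.1, L.coe_nonneg]
    calc |f t - x₀| ≤ C₀ / L * (Real.exp (L * (T - t)) - 1) := h1
      _ ≤ C₀ / L * (Real.exp (L * T) - 1) := by
          apply mul_le_mul_of_nonneg_left _ (div_nonneg hC₀ hL.le)
          linarith
      _ = M := hMdef.symm
  refine ⟨f, hfT, fun t ht => ?_⟩
  have hfix : cl (f t) = f t := hcl_fix _ (le_trans (hbound t ht) (by linarith))
  have hd : HasDerivWithinAt f (F t (cl (f t))) (Icc 0 T) t := hfd t ht
  rwa [hfix] at hd


/-- `h : ℝ → ℕ → ℝ` solves the mean-field HJB ODE system of Proposition 2 on `[0,T]`: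
`h₀' = 0` with `h₀(T) = 0`, and for `1 ≤ q ≤ Q̄`,
`h_q'(t) = φ·q² − sup_{δ ≥ B} A·exp(−(κ+β)·δ + β·δ̄(t))·(δ + h_{q−1}(t) − h_q(t))`
with `h_q(T) = −α·q²`. -/
def IsMFHJBSolution (T A κ β B α φ : ℝ) (Qbar : ℕ) (δbar : ℝ → ℝ) (h : ℝ → ℕ → ℝ) : Prop :=
  (∀ t ∈ Set.Icc (0 : ℝ) T, HasDerivWithinAt (fun s => h s 0) 0 (Set.Icc 0 T) t) ∧
  h T 0 = 0 ∧
  ∀ q : ℕ, 1 ≤ q → q ≤ Qbar →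
    (∀ t ∈ Set.Icc (0 : ℝ) T,
      HasDerivWithinAt (fun s => h s q)
        (φ * (q : ℝ) ^ 2 -
          sSup ((fun δ => A * Real.exp (-(κ + β) * δ + β * δbar t) *
            (δ + h t (q - 1) - h t q)) '' Set.Ici B))
        (Set.Icc 0 T) t) ∧
    h T q = -α * (q : ℝ) ^ 2

/-- Existence and uniqueness for the mean-field HJB ODE system
(Proposition 2): given a continuous mean quote `δ̄`, there is a unique continuously
differentiable solution `h = (h₀, …, h_{Q̄})` on `[0, T]`. -/
theorem meanField_HJB_existence_uniqueness
    (T A κ β B α φ : ℝ) (Qbar : ℕ)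
    (hT : 0 < T) (hA : 0 < A) (hκ : 0 ≤ κ) (hβ : 0 ≤ β) (hκβ : 0 < κ + β)
    (hα : 0 < α) (hφ : 0 < φ) (hQ : 1 ≤ Qbar)
    (δbar : ℝ → ℝ) (hδbar : ContinuousOn δbar (Set.Icc 0 T)) :
    (∃ h : ℝ → ℕ → ℝ, IsMFHJBSolution T A κ β B α φ Qbar δbar h) ∧
    ∀ h₁ h₂ : ℝ → ℕ → ℝ,
      IsMFHJBSolution T A κ β B α φ Qbar δbar h₁ →
      IsMFHJBSolution T A κ β B α φ Qbar δbar h₂ →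
      ∀ t ∈ Set.Icc (0 : ℝ) T, ∀ q ≤ Qbar, h₁ t q = h₂ t q := by
  have hγ := hκβ
  obtain ⟨N, hN⟩ := (isCompact_Icc (a := (0:ℝ)) (b := T)).exists_bound_of_continuousOn
    (continuousOn_const.mul hδbar)
  have hNb : ∀ t ∈ Icc (0:ℝ) T, β * δbar t ≤ N := fun t ht =>
    le_trans (le_abs_self _) (hN t ht)
  set Lr : ℝ := A * Real.exp (-(κ+β) * B + N) with hLdef
  have hLr : 0 < Lr := by positivity
  set L : NNReal := Lr.toNNReal with hLnn
  have hLc : (L : ℝ) = Lr := Real.coe_toNNReal _ hLr.le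
  have hlipF : ∀ (prev : ℝ → ℝ) (P : ℝ), ∀ t ∈ Icc (0:ℝ) T,
      LipschitzWith L (fun x => P - hjbG A (κ+β) B (β * δbar t) (prev t - x)) := by
    intro prev P t ht
    apply LipschitzWith.of_dist_le_mul
    intro x y
    rw [Real.dist_eq, Real.dist_eq, hLc]
    have h1 := hjbG_lipschitz hA hγ B (β * δbar t) (prev t - x) (prev t - y)
    have h2 : Real.exp (-(κ+β) * B + β * δbar t) ≤ Real.exp (-(κ+β) * B + N) :=
      Real.exp_le_exp.2 (by linarith [hNb t ht])
    have h3 : |prev t - x - (prev t - y)| = |x - y| := by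
      rw [show prev t - x - (prev t - y) = -(x - y) by ring, abs_neg]
    have h4 : |P - hjbG A (κ+β) B (β * δbar t) (prev t - x)
        - (P - hjbG A (κ+β) B (β * δbar t) (prev t - y))|
        = |hjbG A (κ+β) B (β * δbar t) (prev t - x) - hjbG A (κ+β) B (β * δbar t) (prev t - y)| := by
      rw [show P - hjbG A (κ+β) B (β * δbar t) (prev t - x)
        - (P - hjbG A (κ+β) B (β * δbar t) (prev t - y))
        = -(hjbG A (κ+β) B (β * δbar t) (prev t - x) - hjbG A (κ+β) B (β * δbar t) (prev t - y)) by ring,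
        abs_neg]
    rw [h4]
    rw [h3] at h1
    calc |hjbG A (κ+β) B (β * δbar t) (prev t - x) - hjbG A (κ+β) B (β * δbar t) (prev t - y)|
        ≤ A * Real.exp (-(κ+β) * B + β * δbar t) * |x - y| := h1
      _ ≤ Lr * |x - y| := by
          rw [hLdef]
          nlinarith [mul_le_mul_of_nonneg_right h2 (abs_nonneg (x - y)), hA.le]
  have hcontF : ∀ (prev : ℝ → ℝ), ContinuousOn prev (Icc 0 T) → ∀ (P x : ℝ),
      ContinuousOn (fun t => P - hjbG A (κ+β) B (β * δbar t) (prev t - x)) (Icc 0 T) := by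
    intro prev hprev P x
    apply continuousOn_const.sub
    unfold hjbG hjbD
    fun_prop
  -- rewriting the sSup into hjbG form
  have hsup : ∀ (t a b : ℝ),
      sSup ((fun δ => A * Real.exp (-(κ + β) * δ + β * δbar t) * (δ + a - b)) '' Set.Ici B)
        = hjbG A (κ+β) B (β * δbar t) (a - b) := by
    intro t a b
    have : (fun δ => A * Real.exp (-(κ + β) * δ + β * δbar t) * (δ + a - b))
        = (fun δ => A * Real.exp (-(κ + β) * δ + β * δbar t) * (δ + (a - b))) := by
      funext δ; ring
    rw [this, hjb_sSup_eq hA hκβ]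
  -- existence step
  have step : ∀ prev : ℝ → ℝ, ContinuousOn prev (Icc (0:ℝ) T) → ∀ P x₀ : ℝ,
      ∃ f : ℝ → ℝ, f T = x₀ ∧ ∀ t ∈ Icc (0:ℝ) T,
        HasDerivWithinAt f (P - hjbG A (κ+β) B (β * δbar t) (prev t - f t)) (Icc 0 T) t := by
    intro prev hprev P x₀
    exact ode_exists hT (fun t x => P - hjbG A (κ+β) B (β * δbar t) (prev t - x)) L
      (by rw [hLc]; exact hLr) (hlipF prev P) (fun x => hcontF prev hprev P x) x₀
  choose sol solT sold using step
  have solc : ∀ prev hp P x₀, ContinuousOn (sol prev hp P x₀) (Icc (0:ℝ) T) :=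
    fun prev hp P x₀ t ht => (sold prev hp P x₀ t ht).continuousWithinAt
  constructor
  · -- existence
    let Fs : ℕ → {f : ℝ → ℝ // ContinuousOn f (Icc (0:ℝ) T)} :=
      fun n => Nat.rec ⟨fun _ => (0:ℝ), continuousOn_const⟩
        (fun q ih => ⟨sol ih.1 ih.2 (φ * ((q+1 : ℕ) : ℝ)^2) (-α * ((q+1 : ℕ) : ℝ)^2),
          solc _ _ _ _⟩) n
    refine ⟨fun t q => (Fs q).1 t, ?_, rfl, ?_⟩
    · exact fun t ht => hasDerivWithinAt_const t _ 0
    · intro q hq1 hqQ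
      obtain ⟨p, rfl⟩ : ∃ p, q = p + 1 := ⟨q - 1, (Nat.succ_pred_eq_of_pos hq1).symm⟩
      have hFs : Fs (p+1) = ⟨sol (Fs p).1 (Fs p).2 (φ * ((p+1 : ℕ) : ℝ)^2)
          (-α * ((p+1 : ℕ) : ℝ)^2), solc _ _ _ _⟩ := rfl
      constructor
      · intro t ht
        have hd := sold (Fs p).1 (Fs p).2 (φ * ((p+1 : ℕ) : ℝ)^2) (-α * ((p+1 : ℕ) : ℝ)^2) t ht
        have hq1' : p + 1 - 1 = p := rfl
        rw [hq1', hsup t ((Fs p).1 t) ((Fs (p+1)).1 t)]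
        rw [hFs]
        exact hd
      · show (Fs (p+1)).1 T = -α * ((p+1 : ℕ) : ℝ)^2
        rw [hFs]
        exact solT (Fs p).1 (Fs p).2 _ _
  · -- uniqueness
    intro h₁ h₂ H₁ H₂
    have main : ∀ q : ℕ, q ≤ Qbar → ∀ t ∈ Icc (0:ℝ) T, h₁ t q = h₂ t q := by
      intro q
      induction q with
      | zero =>
        intro _ t ht
        exact ode_unique (fun _ _ => (0:ℝ)) L
          (fun t _ => (LipschitzWith.const (0:ℝ)).weaken zero_le)
          H₁.1 H₂.1 (H₁.2.1.trans H₂.2.1.symm) t ht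
      | succ p ih =>
        intro hq t ht
        have ihp := ih (le_trans (Nat.le_succ p) hq)
        have hp1 : 1 ≤ p + 1 := Nat.succ_le_succ (Nat.zero_le p)
        have hq1' : p + 1 - 1 = p := rfl
        obtain ⟨hd₁, hT₁⟩ := H₁.2.2 (p+1) hp1 hq
        obtain ⟨hd₂, hT₂⟩ := H₂.2.2 (p+1) hp1 hq
        refine ode_unique
          (fun t x => φ * ((p+1 : ℕ) : ℝ)^2 - hjbG A (κ+β) B (β * δbar t) (h₁ t p - x)) L
          (hlipF (fun s => h₁ s p) _) (f := fun s => h₁ s (p+1)) (g := fun s => h₂ s (p+1))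
          ?_ ?_ (hT₁.trans hT₂.symm) t ht
        · intro s hs
          have := hd₁ s hs
          rwa [hq1', hsup s (h₁ s p) (h₁ s (p+1))] at this
        · intro s hs
          have := hd₂ s hs
          rw [hq1', hsup s (h₂ s p) (h₂ s (p+1))] at this
          rw [← ihp s hs] at this
          exact this
    intro t ht q hq
    exact main q hq t ht
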